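/- Let r be a positive integer and let f be a generalized polynomial with nonnegative real coefficients and exponents in (1/r)ℤ≥0, with f(1) > 0. Let μ := (∑_j j f_j)/f(1) and σ² := (∑_j j² f_j)/f(1) - μ². Then for every real s, the limit as n → ∞ of e^{-s μ √n} · (f(e^{s/√n})/f(1))^n exists and equals e^{s²σ²/2}. -/

import Mathlib

/-- Evaluation of a generalized polynomial `∑ c_j t^j` (a finitely supported
function `ℚ →₀ ℝ`) at a positive real `x`, using real exponentiation. -/
noncomputable def gpEval (f : ℚ →₀ ℝ) (x : ℝ) : ℝ :=
  f.sum fun j c => c * x ^ (j : ℝ)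

open Filter Real Finset

theorem stmt_17 (r : ℕ) (hr : 0 < r) (f : ℚ →₀ ℝ)
    (hexp : ∀ j ∈ f.support, ∃ i : ℕ, j = (i : ℚ) / r)
    (hpos : ∀ j, 0 ≤ f j)
    (h1 : 0 < gpEval f 1)
    (μ σ2 : ℝ)
    (hμ : μ = (f.sum fun j c => (j : ℝ) * c) / gpEval f 1)
    (hσ2 : σ2 = (f.sum fun j c => (j : ℝ) ^ 2 * c) / gpEval f 1 - μ ^ 2)
    (s : ℝ) :
    Filter.Tendsto
      (fun n : ℕ =>
        Real.exp (-s * μ * Real.sqrt n) *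
          (gpEval f (Real.exp (s / Real.sqrt n)) / gpEval f 1) ^ n)
      Filter.atTop (nhds (Real.exp (s ^ 2 * σ2 / 2))) := by
  classical
  set F := f.support with hF
  set S := gpEval f 1 with hS
  set φ : ℝ → ℝ := fun u => ∑ j ∈ F, f j * Real.exp (j * u) with hφdef
  set φ1 : ℝ → ℝ := fun u => ∑ j ∈ F, (j : ℝ) * f j * Real.exp (j * u) with hφ1def
  set φ2 : ℝ → ℝ := fun u => ∑ j ∈ F, (j : ℝ) ^ 2 * f j * Real.exp (j * u) with hφ2def
  have hSval : S = ∑ j ∈ F, f j := by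
    simp [hS, gpEval, Finsupp.sum, hF]
  have hgp : ∀ u : ℝ, gpEval f (Real.exp u) = φ u := by
    intro u
    simp only [gpEval, Finsupp.sum, hφdef, ← hF]
    refine Finset.sum_congr rfl fun j hj => ?_
    rw [← Real.exp_mul, mul_comm u (j : ℝ)]
  have hφpos : ∀ u, 0 < φ u := by
    intro u
    have hne : F.Nonempty := by
      by_contra h
      rw [Finset.not_nonempty_iff_eq_empty] at h
      rw [hSval, h, Finset.sum_empty] at hS
      exact absurd hS.symm (ne_of_gt h1)
    obtain ⟨j0, hj0⟩ := hne
    refine Finset.sum_pos' (fun j hj => ?_) ⟨j0, hj0, ?_⟩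
    · exact mul_nonneg (hpos j) (Real.exp_pos _).le
    · have hfj : 0 < f j0 := lt_of_le_of_ne (hpos j0) (Ne.symm (Finsupp.mem_support_iff.mp hj0))
      exact mul_pos hfj (Real.exp_pos _)
  have hSpos : 0 < S := h1
  -- derivatives
  have hD1 : ∀ u, HasDerivAt φ (φ1 u) u := by
    intro u
    have : ∀ j ∈ F, HasDerivAt (fun u => f j * Real.exp ((j : ℝ) * u))
        ((j : ℝ) * f j * Real.exp ((j : ℝ) * u)) u := by
      intro j _
      have h0 : HasDerivAt (fun u : ℝ => (j : ℝ) * u) ((j : ℝ)) u := by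
        simpa using (hasDerivAt_id u).const_mul (j : ℝ)
      have h1' := (Real.hasDerivAt_exp ((j : ℝ) * u)).comp u h0
      have := h1'.const_mul (f j)
      refine this.congr_deriv ?_
      ring
    exact HasDerivAt.fun_sum this
  have hD2 : ∀ u, HasDerivAt φ1 (φ2 u) u := by
    intro u
    have : ∀ j ∈ F, HasDerivAt (fun u => (j : ℝ) * f j * Real.exp ((j : ℝ) * u))
        ((j : ℝ) ^ 2 * f j * Real.exp ((j : ℝ) * u)) u := by
      intro j _
      have h0 : HasDerivAt (fun u : ℝ => (j : ℝ) * u) ((j : ℝ)) u := by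
        simpa using (hasDerivAt_id u).const_mul (j : ℝ)
      have h1' := (Real.hasDerivAt_exp ((j : ℝ) * u)).comp u h0
      have := h1'.const_mul ((j : ℝ) * f j)
      refine this.congr_deriv ?_
      ring
    exact HasDerivAt.fun_sum this
  -- values at 0
  have hφ0 : φ 0 = S := by
    simp [hφdef, hSval]
  have hφ10 : φ1 0 = f.sum fun j c => (j : ℝ) * c := by
    simp [hφ1def, Finsupp.sum, hF]
  have hφ20 : φ2 0 = f.sum fun j c => (j : ℝ) ^ 2 * c := by
    simp [hφ2def, Finsupp.sum, hF]
  set ψ : ℝ → ℝ := fun u => Real.log (φ u) - Real.log S - μ * u with hψdef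
  set ψ1 : ℝ → ℝ := fun u => φ1 u / φ u - μ with hψ1def
  have hψD : ∀ u, HasDerivAt ψ (ψ1 u) u := by
    intro u
    have hlog : HasDerivAt (fun u => Real.log (φ u)) (φ1 u / φ u) u :=
      (hD1 u).log (hφpos u).ne'
    have hμu : HasDerivAt (fun u : ℝ => μ * u) μ u := by
      simpa using (hasDerivAt_id u).const_mul μ
    simpa [hψdef, hψ1def] using (hlog.sub_const (Real.log S)).fun_sub hμu
  have hψ0 : ψ 0 = 0 := by simp [hψdef, hφ0]
  have hμval : μ = φ1 0 / S := by rw [hμ, hφ10]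
  have hψ10 : ψ1 0 = 0 := by
    rw [hψ1def]
    simp only [hφ0, hμval]
    ring
  have hψ1D : HasDerivAt ψ1 σ2 0 := by
    have hdiv : HasDerivAt (fun u => φ1 u / φ u)
        ((φ2 0 * φ 0 - φ1 0 * φ1 0) / (φ 0) ^ 2) 0 :=
      (hD2 0).div (hD1 0) (hφpos 0).ne'
    have := hdiv.sub_const μ
    have hval : (φ2 0 * φ 0 - φ1 0 * φ1 0) / (φ 0) ^ 2 = σ2 := by
      have hS0 : S ≠ 0 := hSpos.ne'
      rw [hφ0, hσ2, ← hφ20, hμval]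
      field_simp
    rw [hval] at this
    exact this
  -- key limit : ψ t / t² → σ2/2
  have key : Tendsto (fun t : ℝ => ψ t / t ^ 2) (nhdsWithin 0 {(0:ℝ)}ᶜ) (nhds (σ2 / 2)) := by
    have hg : ∀ t : ℝ, HasDerivAt (fun t : ℝ => t ^ 2) (2 * t) t := by
      intro t
      simpa using (hasDerivAt_pow 2 t)
    have hslope : Tendsto (fun t : ℝ => ψ1 t / t) (nhdsWithin 0 {(0:ℝ)}ᶜ) (nhds σ2) := by
      have := hasDerivAt_iff_tendsto_slope.mp hψ1D
      refine this.congr' ?_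
      filter_upwards [self_mem_nhdsWithin] with t ht
      simp [slope_def_field, hψ10, div_eq_iff, sub_zero]
    have hdiv : Tendsto (fun t : ℝ => ψ1 t / (2 * t)) (nhdsWithin 0 {(0:ℝ)}ᶜ)
        (nhds (σ2 / 2)) := by
      have := hslope.div_const 2
      refine this.congr' ?_
      filter_upwards with t
      rw [div_div, mul_comm]
    refine HasDerivAt.lhopital_zero_nhdsNE ?_ ?_ ?_ ?_ ?_ hdiv
    · filter_upwards with t; exact hψD t
    · filter_upwards with t; exact hg t
    · filter_upwards [self_mem_nhdsWithin] with t ht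
      simpa using ht
    · have hcont : Tendsto ψ (nhds 0) (nhds (ψ 0)) := (hψD 0).continuousAt.tendsto
      rw [hψ0] at hcont
      exact hcont.mono_left nhdsWithin_le_nhds
    · have : Tendsto (fun t : ℝ => t ^ 2) (nhds 0) (nhds ((0:ℝ) ^ 2)) :=
        (continuous_pow 2).continuousAt.tendsto
      simpa using this.mono_left nhdsWithin_le_nhds
  by_cases hs : s = 0
  · subst hs
    have : ∀ n : ℕ, Real.exp (-(0:ℝ) * μ * Real.sqrt n) *
        (gpEval f (Real.exp (0 / Real.sqrt n)) / gpEval f 1) ^ n = 1 := by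
      intro n
      simp [← hS, div_self (ne_of_gt h1)]
    simp only [hS, this]
    simp only [zero_pow, ne_eq, OfNat.ofNat_ne_zero, not_false_eq_true, zero_mul, zero_div,
      Real.exp_zero]
    exact tendsto_const_nhds
  -- s ≠ 0 case
  · have hsqrt : Tendsto (fun n : ℕ => Real.sqrt n) atTop atTop := by
      have h2 : Tendsto (fun x : ℝ => x ^ (1/2 : ℝ)) atTop atTop :=
        tendsto_rpow_atTop (by norm_num)
      have h3 := h2.comp tendsto_natCast_atTop_atTop
      refine h3.congr fun n => ?_
      rw [Function.comp_apply, ← Real.sqrt_eq_rpow]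
    have ht0 : Tendsto (fun n : ℕ => s / Real.sqrt n) atTop (nhds 0) :=
      Tendsto.div_atTop tendsto_const_nhds hsqrt
    have htne : ∀ᶠ n : ℕ in atTop, s / Real.sqrt n ≠ 0 := by
      filter_upwards [eventually_ge_atTop 1] with n hn
      have hpos' : (0:ℝ) < Real.sqrt n := Real.sqrt_pos.mpr (by exact_mod_cast hn)
      exact div_ne_zero hs hpos'.ne'
    have ht : Tendsto (fun n : ℕ => s / Real.sqrt n) atTop (nhdsWithin 0 {(0:ℝ)}ᶜ) := by
      rw [tendsto_nhdsWithin_iff]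
      exact ⟨ht0, htne⟩
    have hcomp : Tendsto (fun n : ℕ => ψ (s / Real.sqrt n) / (s / Real.sqrt n) ^ 2)
        atTop (nhds (σ2 / 2)) := key.comp ht
    have hmain : Tendsto (fun n : ℕ => (n : ℝ) * ψ (s / Real.sqrt n)) atTop
        (nhds (s ^ 2 * σ2 / 2)) := by
      have := hcomp.const_mul (s ^ 2)
      have heq : ∀ᶠ n : ℕ in atTop,
          s ^ 2 * (ψ (s / Real.sqrt n) / (s / Real.sqrt n) ^ 2)
            = (n : ℝ) * ψ (s / Real.sqrt n) := by
        filter_upwards [eventually_ge_atTop 1] with n hn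
        have hn0 : (0:ℝ) ≤ (n : ℝ) := Nat.cast_nonneg n
        have hpos' : (0:ℝ) < Real.sqrt n := Real.sqrt_pos.mpr (by exact_mod_cast hn)
        have hsq : Real.sqrt n ^ 2 = (n : ℝ) := Real.sq_sqrt hn0
        have : (s / Real.sqrt n) ^ 2 = s ^ 2 / (n : ℝ) := by
          rw [div_pow, hsq]
        rw [this]
        have hnpos : (0:ℝ) < (n : ℝ) := by exact_mod_cast hn
        field_simp
      have := this.congr' heq
      convert this using 2
      ring
    have hexp' : Tendsto (fun n : ℕ => Real.exp ((n : ℝ) * ψ (s / Real.sqrt n))) atTop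
        (nhds (Real.exp (s ^ 2 * σ2 / 2))) :=
      (Real.continuous_exp.continuousAt.tendsto).comp hmain
    refine hexp'.congr' ?_
    filter_upwards [eventually_ge_atTop 1] with n hn
    have hn0 : (0:ℝ) ≤ (n : ℝ) := Nat.cast_nonneg n
    have hpos' : (0:ℝ) < Real.sqrt n := Real.sqrt_pos.mpr (by exact_mod_cast hn)
    set t := s / Real.sqrt n with htdef
    have hratio : (0:ℝ) < φ t / S := div_pos (hφpos t) hSpos
    have hpow : (gpEval f (Real.exp t) / gpEval f 1) ^ n
        = Real.exp ((n : ℝ) * Real.log (φ t / S)) := by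
      rw [hgp t, ← hS, Real.exp_nat_mul, Real.exp_log hratio]
    rw [hpow, ← Real.exp_add]
    congr 1
    rw [Real.log_div (hφpos t).ne' hSpos.ne']
    have hnt : (n : ℝ) * t = s * Real.sqrt n := by
      have hsq : Real.sqrt n * Real.sqrt n = (n : ℝ) := Real.mul_self_sqrt hn0
      rw [htdef, mul_div_assoc', div_eq_iff hpos'.ne', mul_assoc, hsq]
      ring
    have hψt : ψ t = Real.log (φ t) - Real.log S - μ * t := rfl
    rw [hψt]
    have hexpand : (n : ℝ) * (Real.log (φ t) - Real.log S - μ * t)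
        = (n : ℝ) * (Real.log (φ t) - Real.log S) - μ * ((n : ℝ) * t) := by ring
    rw [hexpand, hnt]
    ring
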